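/- Fix c, L ≥ 2 and M ≥ 1, and let k = ⌈log_L M⌉, R = 2L^{c⁴−2c²+3} − L. Then every subword of length (R+1)·L^{k·c!} of any fixed point of an aperiodic, primitive, bijective length-L substitution on c letters with identity zeroth column contains a monochromatic arithmetic progression of length M. -/

import Mathlib

/-- The `k`-th letter of `ρ^n(a)` for a constant-length-`L` substitution. -/
def substPowLetter {A : Type*} (L : ℕ) (ρ : A → ℕ → A) : ℕ → A → ℕ → A
  | 0, a, _ => a
  | n+1, a, k => ρ (substPowLetter L ρ n a (k / L)) (k % L)

/-- `w` is a one-sided fixed point of the constant-length-`L` substitution `ρ`. -/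
def SubstFixedPoint {A : Type*} (L : ℕ) (ρ : A → ℕ → A) (w : ℕ → A) : Prop :=
  ∀ m i, i < L → w (L * m + i) = ρ (w m) i

/-- `ρ` is primitive: some power of `ρ` maps every letter to a word
containing every letter. -/
def SubstPrimitive {A : Type*} (L : ℕ) (ρ : A → ℕ → A) : Prop :=
  ∃ n, ∀ a b : A, ∃ k, k < L ^ n ∧ substPowLetter L ρ n a k = b

/-- `ρ` is aperiodic: it admits no (purely) periodic fixed point. -/
def SubstAperiodic {A : Type*} (L : ℕ) (ρ : A → ℕ → A) : Prop :=
  ∀ w : ℕ → A, SubstFixedPoint L ρ w → ¬ ∃ p, 1 ≤ p ∧ ∀ j, w (j + p) = w j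

/-- Column permutation of the `n`-th power of a bijective substitution. -/
def colPerm {A : Type*} (L : ℕ) (σ : ℕ → Equiv.Perm A) : ℕ → ℕ → Equiv.Perm A
  | 0, _ => 1
  | n+1, r => σ (r % L) * colPerm L σ n (r / L)

lemma colPerm_spec {A : Type*} (L : ℕ) (hL : 0 < L) (σ : ℕ → Equiv.Perm A)
    (x : ℕ → A) (hx : SubstFixedPoint L (fun a i => σ i a) x) :
    ∀ n r m, r < L ^ n → x (L ^ n * m + r) = colPerm L σ n r (x m) := by
  intro n
  induction n with
  | zero =>
    intro r m hr
    have hr0 : r = 0 := by simpa using hr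
    subst hr0
    simp [colPerm]
  | succ n ih =>
    intro r m hr
    have h1 : L ^ (n+1) * m + r = L * (L ^ n * m + r / L) + r % L := by
      have := Nat.div_add_mod r L
      rw [pow_succ]
      ring_nf
      omega
    have h2 : r / L < L ^ n := by
      rw [Nat.div_lt_iff_lt_mul hL]
      rwa [pow_succ] at hr
    rw [h1, hx _ _ (Nat.mod_lt _ hL), ih _ _ h2]
    simp [colPerm, Equiv.Perm.mul_apply]

lemma geom_bound (L : ℕ) (hL : 0 < L) (k : ℕ) :
    ∀ t, (L ^ k - 1) * ∑ i ∈ Finset.range t, L ^ (k * i) + 1 = L ^ (k * t) := by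
  intro t
  induction t with
  | zero => simp
  | succ t ih =>
    have hpos : 0 < L ^ k := pow_pos hL k
    have hpos' : 0 < L ^ (k * t) := pow_pos hL _
    rw [Finset.sum_range_succ, Nat.mul_add, Nat.mul_succ, pow_add]
    have hsub : (L ^ k - 1) * L ^ (k * t) = L ^ (k * t) * L ^ k - L ^ (k * t) := by
      rw [Nat.sub_mul, one_mul, mul_comm]
    have hle : L ^ (k * t) ≤ L ^ (k * t) * L ^ k := Nat.le_mul_of_pos_right _ hpos
    omega

lemma block_spec {A : Type*} (L : ℕ) (hL : 0 < L) (σ : ℕ → Equiv.Perm A)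
    (x : ℕ → A) (hx : SubstFixedPoint L (fun a i => σ i a) x)
    (k : ℕ) (j : ℕ) (hj : j < L ^ k) :
    ∀ t m, x (m * L ^ (k * t) + j * ∑ i ∈ Finset.range t, L ^ (k * i)) =
      ((colPerm L σ k j) ^ t) (x m) := by
  intro t
  induction t with
  | zero => simp
  | succ t ih =>
    intro m
    have hS : j * ∑ i ∈ Finset.range t, L ^ (k * i) < L ^ (k * t) := by
      calc j * ∑ i ∈ Finset.range t, L ^ (k * i)
          ≤ (L ^ k - 1) * ∑ i ∈ Finset.range t, L ^ (k * i) :=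
            Nat.mul_le_mul_right _ (by omega)
        _ < L ^ (k * t) := by
            have := geom_bound L hL k t
            omega
    have harith : m * L ^ (k * (t+1)) + j * ∑ i ∈ Finset.range (t+1), L ^ (k * i)
        = (L ^ k * m + j) * L ^ (k * t) + j * ∑ i ∈ Finset.range t, L ^ (k * i) := by
      rw [Finset.sum_range_succ, Nat.mul_succ, pow_add]
      ring
    rw [harith, ih, colPerm_spec L hL σ x hx k j m hj,
      ← Equiv.Perm.mul_apply, ← pow_succ]

/-- van der Waerden-type bound: with `k = ⌈log_L M⌉` and
`R = 2L^{c⁴−2c²+3} − L`, every subword of length `(R+1)·L^{k·c!}` of any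
fixed point of an aperiodic, primitive, bijective length-`L` substitution on
`c` letters with identity zeroth column contains a monochromatic arithmetic
progression of length `M`. -/
theorem vdW_type_bound {A : Type*} [Fintype A]
    (c L M : ℕ) (hc : 2 ≤ c) (hL : 2 ≤ L) (hM : 1 ≤ M)
    (hcard : Fintype.card A = c)
    (σ : ℕ → Equiv.Perm A) (hσ0 : σ 0 = 1)
    (hprim : SubstPrimitive L (fun a i => σ i a))
    (haper : SubstAperiodic L (fun a i => σ i a))
    (x : ℕ → A) (hx : SubstFixedPoint L (fun a i => σ i a) x) :
    ∀ s : ℕ, ∃ p d, 1 ≤ d ∧ s ≤ p ∧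
      p + (M - 1) * d <
        s + (2 * L ^ (c ^ 4 - 2 * c ^ 2 + 3) - L + 1) *
          L ^ (Nat.clog L M * Nat.factorial c) ∧
      ∀ j < M, x (p + j * d) = x p := by
  intro s
  have hL0 : 0 < L := by omega
  set k := Nat.clog L M with hk
  set K := k * Nat.factorial c with hK
  set N := L ^ K with hN
  set d := ∑ i ∈ Finset.range (Nat.factorial c), L ^ (k * i) with hd
  have hNpos : 0 < N := pow_pos hL0 _
  have hMk : M ≤ L ^ k := Nat.le_pow_clog (by omega) M
  have hd1 : 1 ≤ d := by
    have h0 : (0 : ℕ) ∈ Finset.range (Nat.factorial c) :=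
      Finset.mem_range.mpr (Nat.factorial_pos c)
    calc (1 : ℕ) = L ^ (k * 0) := by simp
      _ ≤ d := Finset.single_le_sum (f := fun i => L ^ (k * i))
            (fun i _ => Nat.zero_le _) h0
  have hgeo : (L ^ k - 1) * d + 1 = N := geom_bound L hL0 k (Nat.factorial c)
  -- the fixed point is constant on each block AP
  have hfix : ∀ m j, j < L ^ k → x (m * N + j * d) = x m := by
    intro m j hj
    have hb := block_spec L hL0 σ x hx k j hj (Nat.factorial c) m
    have hone : (colPerm L σ k j) ^ Nat.factorial c = 1 := by
      haveI := Classical.decEq A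
      have := pow_card_eq_one (G := Equiv.Perm A) (x := colPerm L σ k j)
      rwa [Fintype.card_perm, hcard] at this
    rw [hone] at hb
    simpa using hb
  -- choose the block containing s
  refine ⟨(s / N + 1) * N, d, hd1, ?_, ?_, ?_⟩
  · have := Nat.div_add_mod s N
    have hmod : s % N < N := Nat.mod_lt _ hNpos
    nlinarith [Nat.div_mul_le_self s N]
  · have hp : (s / N + 1) * N ≤ s + N := by
      have := Nat.div_mul_le_self s N
      rw [add_mul, one_mul]
      omega
    have hMd : (M - 1) * d ≤ (L ^ k - 1) * d :=
      Nat.mul_le_mul_right _ (by omega)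
    have hR : 2 ≤ 2 * L ^ (c ^ 4 - 2 * c ^ 2 + 3) - L + 1 := by
      have h1 : L ≤ L ^ (c ^ 4 - 2 * c ^ 2 + 3) := by
        calc L = L ^ 1 := (pow_one L).symm
          _ ≤ L ^ (c ^ 4 - 2 * c ^ 2 + 3) :=
            Nat.pow_le_pow_right hL0 (by omega)
      omega
    have h2N : s + 2 * N ≤ s + (2 * L ^ (c ^ 4 - 2 * c ^ 2 + 3) - L + 1) * N :=
      Nat.add_le_add_left (Nat.mul_le_mul_right _ hR) s
    have : L ^ (Nat.clog L M * Nat.factorial c) = N := rfl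
    omega
  · intro j hj
    have h1 : x ((s / N + 1) * N + j * d) = x (s / N + 1) :=
      hfix _ j (lt_of_lt_of_le hj hMk)
    have h2 : x ((s / N + 1) * N + 0 * d) = x (s / N + 1) :=
      hfix _ 0 (by positivity)
    simp only [zero_mul, add_zero] at h2
    rw [h1, h2]
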